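/- Every symmetric (0,2)-tensor V on null metric hypersurface data of dimension n ≥ 2 decomposes uniquely as V = 2ℓ⊗_s ŵ + Q_V(ℓ⊗ℓ + (1/(n−1))ℓ⁽²⁾γ) + (tr_P V/(n−1))γ + V^H, where Q_V := V(n,n), ŵ := ι_nV − Q_V ℓ (which satisfies ŵ(n)=0), and V^H lies in the kernel K₀ of the energy-momentum map τ. -/

import Mathlib

open Module LinearMap

variable {V : Type*} [AddCommGroup V] [Module ℝ V] [FiniteDimensional ℝ V]

/-- The trace `P^{ab} W_{ab}`. -/
noncomputable def trP (P : Dual ℝ V →ₗ[ℝ] V) (W : V →ₗ[ℝ] Dual ℝ V) : ℝ :=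
  LinearMap.trace ℝ V (P ∘ₗ W)

lemma trace_smulRight'' (f : Dual ℝ V) (x : V) :
    LinearMap.trace ℝ V (f.smulRight x) = f x := by
  have h : f.smulRight x = dualTensorHom ℝ V V (f ⊗ₜ x) := by
    ext m; simp
  rw [h, trace_eq_contract_apply]
  simp

lemma trP_add (P : Dual ℝ V →ₗ[ℝ] V) (A B : V →ₗ[ℝ] Dual ℝ V) :
    trP P (A + B) = trP P A + trP P B := by
  simp [trP, LinearMap.comp_add]

lemma trP_sub (P : Dual ℝ V →ₗ[ℝ] V) (A B : V →ₗ[ℝ] Dual ℝ V) :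
    trP P (A - B) = trP P A - trP P B := by
  simp [trP, LinearMap.comp_sub]

lemma trP_smul (P : Dual ℝ V →ₗ[ℝ] V) (c : ℝ) (A : V →ₗ[ℝ] Dual ℝ V) :
    trP P (c • A) = c * trP P A := by
  simp [trP, LinearMap.comp_smul]

/-- Every symmetric (0,2)-tensor `W` decomposes uniquely as
`W = 2ℓ⊗ₛŵ + Q_W (ℓ⊗ℓ + ℓ⁽²⁾γ/(𝔫-1)) + (tr_P W/(𝔫-1)) γ + W^H`
with `Q_W = W(n,n)`, `ŵ = ι_n W - Q_W ℓ` (which annihilates `n`) and `W^H` in the kernel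
`K₀ = {H : H(n,·)=0, tr_P H = 0}` of the energy-momentum map. -/
theorem canonical_decomposition_of_symmetric_tensor
    (γ : V →ₗ[ℝ] Dual ℝ V) (ℓ : Dual ℝ V) (l2 : ℝ) (n : V) (P : Dual ℝ V →ₗ[ℝ] V)
    (𝔫 : ℕ) (hdim : finrank ℝ V = 𝔫) (h𝔫 : 2 ≤ 𝔫)
    (hγsym : ∀ x y, γ x y = γ y x)
    (hγn : γ n = 0)
    (hℓn : ℓ n = 1)
    (hPsym : ∀ ω χ : Dual ℝ V, ω (P χ) = χ (P ω))
    (hPℓ : P ℓ + l2 • n = 0)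
    (hPγ : ∀ x : V, P (γ x) + ℓ x • n = x)
    (W : V →ₗ[ℝ] Dual ℝ V) (hWsym : ∀ x y, W x y = W y x) :
    (W n - W n n • ℓ) n = 0 ∧
    (∃! H : V →ₗ[ℝ] Dual ℝ V, (H n = 0 ∧ trP P H = 0) ∧
      W = ℓ.smulRight (W n - W n n • ℓ) + (W n - W n n • ℓ).smulRight ℓ
        + W n n • (ℓ.smulRight ℓ + (l2 / ((𝔫 : ℝ) - 1)) • γ)
        + (trP P W / ((𝔫 : ℝ) - 1)) • γ + H) := by
  have hwn : (W n - W n n • ℓ) n = 0 := by simp [hℓn]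
  set w : Dual ℝ V := W n - W n n • ℓ with hw
  have hne : ((𝔫 : ℝ) - 1) ≠ 0 := by
    have : (2 : ℝ) ≤ (𝔫 : ℝ) := by exact_mod_cast h𝔫
    linarith
  have hPℓ' : P ℓ = -(l2 • n) := eq_neg_of_add_eq_zero_left hPℓ
  set R : V →ₗ[ℝ] Dual ℝ V :=
    ℓ.smulRight w + w.smulRight ℓ
      + W n n • (ℓ.smulRight ℓ + (l2 / ((𝔫 : ℝ) - 1)) • γ)
      + (trP P W / ((𝔫 : ℝ) - 1)) • γ with hR
  -- traces of the pieces
  have t1 : trP P (ℓ.smulRight w) = 0 := by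
    have h : P ∘ₗ ℓ.smulRight w = ℓ.smulRight (P w) := by ext x; simp
    rw [trP, h, trace_smulRight'', hPsym, hPℓ']
    simp [hwn]
  have t2 : trP P (w.smulRight ℓ) = 0 := by
    have h : P ∘ₗ w.smulRight ℓ = w.smulRight (P ℓ) := by ext x; simp
    rw [trP, h, trace_smulRight'', hPℓ']
    simp [hwn]
  have t3 : trP P (ℓ.smulRight ℓ) = -l2 := by
    have h : P ∘ₗ ℓ.smulRight ℓ = ℓ.smulRight (P ℓ) := by ext x; simp
    rw [trP, h, trace_smulRight'', hPℓ']
    simp [hℓn]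
  have t4 : trP P γ = (𝔫 : ℝ) - 1 := by
    have h : P ∘ₗ γ = LinearMap.id - ℓ.smulRight n := by
      ext x
      have := hPγ x
      simp only [LinearMap.comp_apply, LinearMap.sub_apply, LinearMap.id_apply,
        LinearMap.smulRight_apply]
      exact eq_sub_of_add_eq this
    rw [trP, h, map_sub, trace_id, hdim, trace_smulRight'', hℓn]
  have tR : trP P R = trP P W := by
    rw [hR, trP_add, trP_add, trP_add, trP_smul, trP_add, trP_smul, trP_smul,
      t1, t2, t3, t4]
    field_simp
    ring
  have hRn : R n = W n := by
    have : R n = ℓ n • w + w n • ℓ + W n n • (ℓ n • ℓ + (l2 / ((𝔫 : ℝ) - 1)) • γ n)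
        + (trP P W / ((𝔫 : ℝ) - 1)) • γ n := by
      simp [hR]
    rw [this, hℓn, hwn, hγn, hw]
    module
  refine ⟨hwn, ⟨W - R, ⟨⟨?_, ?_⟩, ?_⟩, ?_⟩⟩
  · rw [LinearMap.sub_apply, hRn, sub_self]
  · rw [trP_sub, tR, sub_self]
  · abel
  · rintro H ⟨-, hH⟩
    rw [hH]; abel
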